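/- For permutations w, v in S_n, one has w ≤ v in Bruhat order if and only if k_w(q,p) ≤ k_v(q,p) for all (q,p) in Ess(w). -/

import Mathlib

/-- 0-indexed rank function (equals k_w(q+1,p+1) of the paper's 1-indexed one). -/
def kfn {n : ℕ} (w : Equiv.Perm (Fin n)) (q p : ℕ) : ℕ :=
  (Finset.univ.filter (fun s : Fin n => (s : ℕ) ≤ p ∧ q < (w s : ℕ))).card

/-- The Rothe diagram of w (0-indexed). -/
def rothe {n : ℕ} (w : Equiv.Perm (Fin n)) : Set (ℕ × ℕ) :=
  {b | ∃ hj : b.2 < n, b.1 < (w ⟨b.2, hj⟩ : ℕ) ∧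
       ∃ hi : b.1 < n, b.2 < (w.symm ⟨b.1, hi⟩ : ℕ)}

/-- The essential set: south-east corners of the Rothe diagram. -/
def essSet {n : ℕ} (w : Equiv.Perm (Fin n)) : Set (ℕ × ℕ) :=
  {b | b ∈ rothe w ∧ (b.1 + 1, b.2) ∉ rothe w ∧ (b.1, b.2 + 1) ∉ rothe w}

/-- The number of inversions (Coxeter length) of a permutation. -/
def invCount {n : ℕ} (u : Equiv.Perm (Fin n)) : ℕ :=
  (Finset.univ.filter (fun ij : Fin n × Fin n => ij.1 < ij.2 ∧ u ij.2 < u ij.1)).card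

/-- Bruhat order on S_n: w ≤ v iff v is obtained from w by a chain of
right multiplications by transpositions, each increasing the length. -/
def bruhatLE {n : ℕ} (w v : Equiv.Perm (Fin n)) : Prop :=
  Relation.ReflTransGen
    (fun u u' => (∃ a b : Fin n, a ≠ b ∧ u' = u * Equiv.swap a b) ∧ invCount u < invCount u')
    w v

namespace BP
open Finset Equiv

variable {n : ℕ}

lemma kfn_mono_p (u : Equiv.Perm (Fin n)) {q p p' : ℕ} (h : p ≤ p') :
    kfn u q p ≤ kfn u q p' := by
  apply Finset.card_le_card
  intro s hs
  simp only [Finset.mem_filter, Finset.mem_univ, true_and] at hs ⊢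
  omega

lemma kfn_anti_q (u : Equiv.Perm (Fin n)) {q q' p : ℕ} (h : q ≤ q') :
    kfn u q' p ≤ kfn u q p := by
  apply Finset.card_le_card
  intro s hs
  simp only [Finset.mem_filter, Finset.mem_univ, true_and] at hs ⊢
  omega

lemma kfn_succ_p_le (u : Equiv.Perm (Fin n)) (q p : ℕ) :
    kfn u q (p + 1) ≤ kfn u q p + 1 := by
  have hsub : (Finset.univ.filter (fun s : Fin n => (s : ℕ) ≤ p + 1 ∧ q < (u s : ℕ)))
      ⊆ (Finset.univ.filter (fun s : Fin n => (s : ℕ) ≤ p ∧ q < (u s : ℕ)))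
        ∪ (Finset.univ.filter (fun s : Fin n => (s : ℕ) = p + 1)) := by
    intro s hs
    simp only [Finset.mem_filter, Finset.mem_univ, true_and, Finset.mem_union] at hs ⊢
    omega
  calc kfn u q (p+1) ≤ _ := Finset.card_le_card hsub
    _ ≤ kfn u q p + (Finset.univ.filter (fun s : Fin n => (s : ℕ) = p + 1)).card :=
        Finset.card_union_le _ _
    _ ≤ kfn u q p + 1 := by
        gcongr
        apply Finset.card_le_one.2
        intro a ha b hb
        simp only [Finset.mem_filter] at ha hb
        exact Fin.ext (ha.2.trans hb.2.symm)

lemma kfn_succ_q_le (u : Equiv.Perm (Fin n)) (q p : ℕ) :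
    kfn u q p ≤ kfn u (q + 1) p + 1 := by
  have hsub : (Finset.univ.filter (fun s : Fin n => (s : ℕ) ≤ p ∧ q < (u s : ℕ)))
      ⊆ (Finset.univ.filter (fun s : Fin n => (s : ℕ) ≤ p ∧ q + 1 < (u s : ℕ)))
        ∪ (Finset.univ.filter (fun s : Fin n => ((u s : ℕ)) = q + 1)) := by
    intro s hs
    simp only [Finset.mem_filter, Finset.mem_univ, true_and, Finset.mem_union] at hs ⊢
    omega
  calc kfn u q p ≤ _ := Finset.card_le_card hsub
    _ ≤ kfn u (q+1) p + (Finset.univ.filter (fun s : Fin n => ((u s : ℕ)) = q + 1)).card :=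
        Finset.card_union_le _ _
    _ ≤ kfn u (q+1) p + 1 := by
        gcongr
        apply Finset.card_le_one.2
        intro a ha b hb
        simp only [Finset.mem_filter] at ha hb
        exact u.injective (Fin.ext (ha.2.trans hb.2.symm))

/-- increment when the new position p+1 carries a large value -/
lemma kfn_succ_p_eq (u : Equiv.Perm (Fin n)) {q p : ℕ} (h : p + 1 < n)
    (hv : q < (u ⟨p+1, h⟩ : ℕ)) : kfn u q (p + 1) = kfn u q p + 1 := by
  have hins : (Finset.univ.filter (fun s : Fin n => (s : ℕ) ≤ p + 1 ∧ q < (u s : ℕ)))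
      = insert ⟨p+1, h⟩ (Finset.univ.filter (fun s : Fin n => (s : ℕ) ≤ p ∧ q < (u s : ℕ))) := by
    ext s
    simp only [Finset.mem_filter, Finset.mem_univ, true_and, Finset.mem_insert]
    constructor
    · rintro ⟨h1, h2⟩
      rcases eq_or_lt_of_le h1 with he | hl
      · left; exact Fin.ext he
      · right; exact ⟨by omega, h2⟩
    · rintro (rfl | ⟨h1, h2⟩)
      · exact ⟨le_refl _, hv⟩
      · exact ⟨by omega, h2⟩
  rw [kfn, hins, Finset.card_insert_of_notMem, kfn]
  simp only [Finset.mem_filter, Finset.mem_univ, true_and, not_and]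
  intro hc; omega

/-- no change when the new position p+1 carries a small value -/
lemma kfn_succ_p_eq' (u : Equiv.Perm (Fin n)) {q p : ℕ} (h : p + 1 < n)
    (hv : ¬ q < (u ⟨p+1, h⟩ : ℕ)) : kfn u q (p + 1) = kfn u q p := by
  unfold kfn
  congr 1
  apply Finset.filter_congr
  intro s _
  constructor
  · rintro ⟨h1, h2⟩
    refine ⟨?_, h2⟩
    rcases eq_or_lt_of_le h1 with he | hl
    · exact absurd h2 (by rw [show s = ⟨p+1, h⟩ from Fin.ext he]; exact hv)
    · omega
  · rintro ⟨h1, h2⟩; exact ⟨by omega, h2⟩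

lemma kfn_zero_p (u : Equiv.Perm (Fin n)) {q : ℕ} (h0 : 0 < n)
    (hv : ¬ q < (u ⟨0, h0⟩ : ℕ)) : kfn u q 0 = 0 := by
  rw [kfn, Finset.card_eq_zero, Finset.filter_eq_empty_iff]
  intro s _
  rintro ⟨h1, h2⟩
  have hs : s = ⟨0, h0⟩ := by apply Fin.ext; simp; omega
  rw [hs] at h2
  exact hv h2

/-- value q+1 occupied among positions ≤ p: row step down adds one -/
lemma kfn_occ (u : Equiv.Perm (Fin n)) {q p : ℕ} (hq : q + 1 < n)
    (hocc : ((u.symm ⟨q+1, hq⟩ : Fin n) : ℕ) ≤ p) :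
    kfn u q p = kfn u (q + 1) p + 1 := by
  have hins : (Finset.univ.filter (fun s : Fin n => (s : ℕ) ≤ p ∧ q < (u s : ℕ)))
      = insert (u.symm ⟨q+1, hq⟩)
          (Finset.univ.filter (fun s : Fin n => (s : ℕ) ≤ p ∧ q + 1 < (u s : ℕ))) := by
    ext s
    simp only [Finset.mem_filter, Finset.mem_univ, true_and, Finset.mem_insert]
    constructor
    · rintro ⟨h1, h2⟩
      by_cases hs : s = u.symm ⟨q+1, hq⟩
      · left; exact hs
      · right
        refine ⟨h1, ?_⟩
        have : (u s : ℕ) ≠ q + 1 := by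
          intro hc
          exact hs (by rw [← u.symm_apply_apply s, show u s = ⟨q+1,hq⟩ from Fin.ext hc])
        omega
    · rintro (rfl | ⟨h1, h2⟩)
      · refine ⟨hocc, ?_⟩
        rw [u.apply_symm_apply]; exact Nat.lt_succ_self q
      · exact ⟨h1, by omega⟩
  rw [kfn, hins, Finset.card_insert_of_notMem, kfn]
  simp only [Finset.mem_filter, Finset.mem_univ, true_and, not_and]
  intro _
  rw [u.apply_symm_apply]; simp

/-- value q+1 not occupied among positions ≤ p: rows q and q+1 agree -/
lemma kfn_unocc (u : Equiv.Perm (Fin n)) {q p : ℕ} (hq : q + 1 < n)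
    (hunocc : p < ((u.symm ⟨q+1, hq⟩ : Fin n) : ℕ)) :
    kfn u q p = kfn u (q + 1) p := by
  unfold kfn
  congr 1
  apply Finset.filter_congr
  intro s _
  constructor
  · rintro ⟨h1, h2⟩
    refine ⟨h1, ?_⟩
    have : (u s : ℕ) ≠ q + 1 := by
      intro hc
      have hse : s = u.symm ⟨q+1, hq⟩ := by
        rw [← u.symm_apply_apply s, show u s = ⟨q+1,hq⟩ from Fin.ext hc]
      have := congrArg (fun t : Fin n => (t : ℕ)) hse
      omega
    omega
  · rintro ⟨h1, h2⟩; exact ⟨h1, by omega⟩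

/-- far boundary: for p ≥ n, kfn is independent of the permutation -/
lemma kfn_big_p (u : Equiv.Perm (Fin n)) {q p : ℕ} (h : n ≤ p) :
    kfn u q p = (Finset.univ.filter (fun t : Fin n => q < (t : ℕ))).card := by
  rw [kfn]
  apply Finset.card_bij' (fun s _ => u s) (fun t _ => u.symm t)
  · intro a ha
    simp only [Finset.mem_filter, Finset.mem_univ, true_and] at ha ⊢
    exact ha.2
  · intro t ht
    simp only [Finset.mem_filter, Finset.mem_univ, true_and] at ht ⊢
    refine ⟨by have := (u.symm t).isLt; omega, by rwa [u.apply_symm_apply]⟩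
  · intro a _; exact u.symm_apply_apply a
  · intro t _; exact u.apply_symm_apply t

lemma kfn_big_q (u : Equiv.Perm (Fin n)) {q p : ℕ} (h : n ≤ q + 1) :
    kfn u q p = 0 := by
  rw [kfn, Finset.card_eq_zero, Finset.filter_eq_empty_iff]
  intro s _
  rintro ⟨_, h2⟩
  have := (u s).isLt; omega

lemma card_le_p (p : ℕ) : (Finset.univ.filter (fun s : Fin n => (s : ℕ) ≤ p)).card ≤ p + 1 := by
  by_cases h : p < n
  · have : (Finset.univ.filter (fun s : Fin n => (s : ℕ) ≤ p)) = Finset.Iic ⟨p, h⟩ := by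
      ext s; simp [Fin.le_def]
    rw [this, Fin.card_Iic]
  · calc (Finset.univ.filter (fun s : Fin n => (s : ℕ) ≤ p)).card
        ≤ (Finset.univ : Finset (Fin n)).card := Finset.card_le_card (Finset.filter_subset _ _)
      _ = n := by simp
      _ ≤ p + 1 := by omega

lemma card_eq_p {p : ℕ} (h : p < n) :
    (Finset.univ.filter (fun s : Fin n => (s : ℕ) ≤ p)).card = p + 1 := by
  have : (Finset.univ.filter (fun s : Fin n => (s : ℕ) ≤ p)) = Finset.Iic ⟨p, h⟩ := by
    ext s; simp [Fin.le_def]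
  rw [this, Fin.card_Iic]

/-- q = 0, p < n: at least p of the p+1 first positions have value > 0 -/
lemma kfn_zero_q_ge (u : Equiv.Perm (Fin n)) {p : ℕ} (h : p < n) :
    p ≤ kfn u 0 p := by
  classical
  have hsub : (Finset.univ.filter (fun s : Fin n => (s : ℕ) ≤ p)) ⊆
      (Finset.univ.filter (fun s : Fin n => (s : ℕ) ≤ p ∧ 0 < (u s : ℕ)))
        ∪ {u.symm ⟨0, by omega⟩} := by
    intro s hs
    simp only [Finset.mem_filter, Finset.mem_univ, true_and, Finset.mem_union,
      Finset.mem_singleton] at hs ⊢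
    by_cases h0 : (u s : ℕ) = 0
    · right
      rw [← u.symm_apply_apply s, show u s = ⟨0, by omega⟩ from Fin.ext h0]
    · left; exact ⟨hs, by omega⟩
  have := (Finset.card_le_card hsub).trans (Finset.card_union_le _ _)
  rw [card_eq_p h] at this
  simp only [Finset.card_singleton] at this
  unfold kfn
  omega

/-- q = 0, value 0 occupied among positions ≤ p : kfn u 0 p ≤ p -/
lemma kfn_zero_q_le (u : Equiv.Perm (Fin n)) {p : ℕ} (h0 : 0 < n)
    (hocc : ((u.symm ⟨0, h0⟩ : Fin n) : ℕ) ≤ p) : kfn u 0 p ≤ p := by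
  classical
  have hsub : (Finset.univ.filter (fun s : Fin n => (s : ℕ) ≤ p ∧ 0 < (u s : ℕ)))
      ⊆ (Finset.univ.filter (fun s : Fin n => (s : ℕ) ≤ p)).erase (u.symm ⟨0, h0⟩) := by
    intro s hs
    simp only [Finset.mem_filter, Finset.mem_univ, true_and, Finset.mem_erase] at hs ⊢
    refine ⟨?_, hs.1⟩
    intro hc
    rw [hc, u.apply_symm_apply] at hs
    simp at hs
  have h2 := Finset.card_le_card hsub
  rw [Finset.card_erase_of_mem (by simp [hocc])] at h2
  have h3 := card_le_p (n := n) p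
  unfold kfn
  omega


/-- split kfn at the last position -/
lemma kfn_split_pos (u : Equiv.Perm (Fin n)) (i : Fin n) {q : ℕ} (h : q < (u i : ℕ)) :
    kfn u q (i : ℕ) =
      (Finset.univ.filter (fun s : Fin n => (s : ℕ) < (i : ℕ) ∧ q < (u s : ℕ))).card + 1 := by
  have hins : (Finset.univ.filter (fun s : Fin n => (s : ℕ) ≤ (i:ℕ) ∧ q < (u s : ℕ)))
      = insert i (Finset.univ.filter (fun s : Fin n => (s : ℕ) < (i:ℕ) ∧ q < (u s : ℕ))) := by
    ext s
    simp only [Finset.mem_filter, Finset.mem_univ, true_and, Finset.mem_insert]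
    constructor
    · rintro ⟨h1, h2⟩
      rcases eq_or_lt_of_le h1 with he | hl
      · left; exact Fin.ext he
      · right; exact ⟨hl, h2⟩
    · rintro (rfl | ⟨h1, h2⟩)
      · exact ⟨le_refl _, h⟩
      · exact ⟨le_of_lt h1, h2⟩
  rw [kfn, hins, Finset.card_insert_of_notMem]
  simp only [Finset.mem_filter, Finset.mem_univ, true_and, not_and]
  intro hc; omega

lemma kfn_split_neg (u : Equiv.Perm (Fin n)) (i : Fin n) {q : ℕ} (h : ¬ q < (u i : ℕ)) :
    kfn u q (i : ℕ) =
      (Finset.univ.filter (fun s : Fin n => (s : ℕ) < (i : ℕ) ∧ q < (u s : ℕ))).card := by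
  rw [kfn]
  congr 1
  apply Finset.filter_congr
  intro s _
  constructor
  · rintro ⟨h1, h2⟩
    rcases eq_or_lt_of_le h1 with he | hl
    · exact absurd h2 (by rw [show s = i from Fin.ext he]; exact h)
    · exact ⟨hl, h2⟩
  · rintro ⟨h1, h2⟩; exact ⟨le_of_lt h1, h2⟩

/-- split kfn at a middle index i ≤ p -/
lemma kfn_split2 (u : Equiv.Perm (Fin n)) (i : Fin n) {q p : ℕ} (hip : (i : ℕ) ≤ p) :
    kfn u q p =
      (Finset.univ.filter (fun s : Fin n => (s : ℕ) < (i : ℕ) ∧ q < (u s : ℕ))).card +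
      (Finset.univ.filter (fun s : Fin n =>
        (i : ℕ) ≤ (s : ℕ) ∧ (s : ℕ) ≤ p ∧ q < (u s : ℕ))).card := by
  rw [kfn, ← Finset.card_union_of_disjoint]
  · congr 1
    ext s
    simp only [Finset.mem_filter, Finset.mem_univ, true_and, Finset.mem_union]
    omega
  · rw [Finset.disjoint_left]
    intro s hs hs'
    simp only [Finset.mem_filter, Finset.mem_univ, true_and] at hs hs'
    omega

section Swap

variable (u : Equiv.Perm (Fin n)) {a b : Fin n}

/-- outside the columns strictly between a and b, swapping doesn't change kfn -/
lemma kfn_swap_out (hab : (a:ℕ) < (b:ℕ)) {q p : ℕ} (h : p < (a:ℕ) ∨ (b:ℕ) ≤ p) :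
    kfn (u * Equiv.swap a b) q p = kfn u q p := by
  have key : ∀ s : Fin n, ((Equiv.swap a b s : Fin n) : ℕ) ≤ p ↔ (s : ℕ) ≤ p := by
    intro s
    rcases eq_or_ne s a with rfl | hsa
    · rw [Equiv.swap_apply_left]; omega
    rcases eq_or_ne s b with rfl | hsb
    · rw [Equiv.swap_apply_right]; omega
    · rw [Equiv.swap_apply_of_ne_of_ne hsa hsb]
  unfold kfn
  apply Finset.card_bij' (fun s _ => Equiv.swap a b s) (fun s _ => Equiv.swap a b s)
  · intro s hs
    simp only [Finset.mem_filter, Finset.mem_univ, true_and] at hs ⊢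
    simp only [Equiv.Perm.mul_apply] at hs ⊢
    exact ⟨(key s).2 hs.1, hs.2⟩
  · intro s hs
    simp only [Finset.mem_filter, Finset.mem_univ, true_and] at hs ⊢
    simp only [Equiv.Perm.mul_apply] at hs ⊢
    refine ⟨(key s).2 hs.1, ?_⟩
    rw [Equiv.swap_apply_self]
    exact hs.2
  · intro s _; exact Equiv.swap_apply_self _ _ _
  · intro s _; exact Equiv.swap_apply_self _ _ _

/-- in the strip a ≤ p < b, with increasing values, kfn weakly increases -/
lemma kfn_swap_le (hval : (u a : ℕ) < (u b : ℕ)) {q p : ℕ} (hpb : p < (b:ℕ)) :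
    kfn u q p ≤ kfn (u * Equiv.swap a b) q p := by
  apply Finset.card_le_card
  intro s hs
  simp only [Finset.mem_filter, Finset.mem_univ, true_and] at hs ⊢
  simp only [Equiv.Perm.mul_apply] at hs ⊢
  obtain ⟨h1, h2⟩ := hs
  refine ⟨h1, ?_⟩
  rcases eq_or_ne s a with rfl | hsa
  · rw [Equiv.swap_apply_left]; omega
  rcases eq_or_ne s b with rfl | hsb
  · omega
  · rwa [Equiv.swap_apply_of_ne_of_ne hsa hsb]

/-- in the strip, kfn increases by at most 1 -/
lemma kfn_swap_le_add (hab : (a:ℕ) < (b:ℕ)) {q p : ℕ} (hpb : p < (b:ℕ)) :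
    kfn (u * Equiv.swap a b) q p ≤ kfn u q p + 1 := by
  have hsub : (Finset.univ.filter (fun s : Fin n => (s : ℕ) ≤ p ∧ q < ((u * Equiv.swap a b) s : ℕ)))
      ⊆ insert a (Finset.univ.filter (fun s : Fin n => (s : ℕ) ≤ p ∧ q < (u s : ℕ))) := by
    intro s hs
    simp only [Finset.mem_filter, Finset.mem_univ, true_and, Finset.mem_insert] at hs ⊢
    simp only [Equiv.Perm.mul_apply] at hs ⊢
    obtain ⟨h1, h2⟩ := hs
    rcases eq_or_ne s a with rfl | hsa
    · left; rfl
    rcases eq_or_ne s b with rfl | hsb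
    · omega
    · rw [Equiv.swap_apply_of_ne_of_ne hsa hsb] at h2
      right; exact ⟨h1, h2⟩
  exact (Finset.card_le_card hsub).trans (Finset.card_insert_le _ _)

/-- strict increase in the critical rectangle -/
lemma kfn_swap_lt (hab : (a:ℕ) < (b:ℕ)) {q p : ℕ}
    (hqa : (u a : ℕ) ≤ q) (hqb : q < (u b : ℕ))
    (hpa : (a:ℕ) ≤ p) (hpb : p < (b:ℕ)) :
    kfn u q p < kfn (u * Equiv.swap a b) q p := by
  apply Finset.card_lt_card
  rw [Finset.ssubset_iff_of_subset]
  · refine ⟨a, ?_, ?_⟩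
    · simp only [Finset.mem_filter, Finset.mem_univ, true_and]
      simp only [Equiv.Perm.mul_apply, Equiv.swap_apply_left]
      exact ⟨hpa, hqb⟩
    · simp only [Finset.mem_filter, Finset.mem_univ, true_and, not_and]
      intro _; omega
  · intro s hs
    simp only [Finset.mem_filter, Finset.mem_univ, true_and] at hs ⊢
    simp only [Equiv.Perm.mul_apply] at hs ⊢
    obtain ⟨h1, h2⟩ := hs
    refine ⟨h1, ?_⟩
    rcases eq_or_ne s a with rfl | hsa
    · omega
    rcases eq_or_ne s b with rfl | hsb
    · omega
    · rwa [Equiv.swap_apply_of_ne_of_ne hsa hsb]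

/-- in the strip but outside the critical q-range, kfn does not increase -/
lemma kfn_swap_le' (hab : (a:ℕ) < (b:ℕ)) {q p : ℕ}
    (hq : q < (u a : ℕ) ∨ (u b : ℕ) ≤ q) (hpb : p < (b:ℕ)) :
    kfn (u * Equiv.swap a b) q p ≤ kfn u q p := by
  apply Finset.card_le_card
  intro s hs
  simp only [Finset.mem_filter, Finset.mem_univ, true_and] at hs ⊢
  simp only [Equiv.Perm.mul_apply] at hs ⊢
  obtain ⟨h1, h2⟩ := hs
  refine ⟨h1, ?_⟩
  rcases eq_or_ne s a with rfl | hsa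
  · rw [Equiv.swap_apply_left] at h2; omega
  rcases eq_or_ne s b with rfl | hsb
  · omega
  · rwa [Equiv.swap_apply_of_ne_of_ne hsa hsb] at h2

/-- global weak monotonicity for an increasing transposition -/
lemma kfn_swap_mono (hab : (a:ℕ) < (b:ℕ)) (hval : (u a : ℕ) < (u b : ℕ)) (q p : ℕ) :
    kfn u q p ≤ kfn (u * Equiv.swap a b) q p := by
  rcases lt_or_ge p (b:ℕ) with h | h
  · exact kfn_swap_le u hval h
  · rw [kfn_swap_out u hab (Or.inr h)]

end Swap


lemma invCount_eq_sum (u : Equiv.Perm (Fin n)) :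
    invCount u = ∑ t : Fin n, kfn u ((u t : ℕ)) ((t : ℕ)) := by
  rw [invCount]
  rw [Finset.card_eq_sum_card_fiberwise (f := Prod.snd) (t := Finset.univ)
    (fun x _ => Finset.mem_univ _)]
  apply Finset.sum_congr rfl
  intro t _
  rw [Finset.filter_filter, kfn]
  apply Finset.card_bij (fun ij _ => ij.1)
  · rintro ⟨s, t'⟩ hst
    simp only [Finset.mem_filter, Finset.mem_univ, true_and] at hst ⊢
    obtain ⟨⟨h1, h2⟩, rfl⟩ := hst
    exact ⟨le_of_lt h1, h2⟩
  · rintro ⟨s, t'⟩ hst ⟨s2, t2⟩ hst2 he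
    simp only [Finset.mem_filter, Finset.mem_univ, true_and] at hst hst2
    simp only [] at he
    rw [Prod.ext_iff]
    exact ⟨he, hst.2.trans hst2.2.symm⟩
  · intro s hs
    simp only [Finset.mem_filter, Finset.mem_univ, true_and] at hs
    refine ⟨(s, t), ?_, rfl⟩
    simp only [Finset.mem_filter, Finset.mem_univ, true_and]
    have hne : s ≠ t := by
      intro h; rw [h] at hs; exact absurd hs.2 (lt_irrefl _)
    have : (s:ℕ) < (t:ℕ) := lt_of_le_of_ne hs.1 (fun hc => hne (Fin.ext hc))
    exact ⟨⟨this, hs.2⟩, trivial⟩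

/-- counting split: #(s<c, q<u s) = #(s<c, q'<u s) + #(s<c, q<u s ≤ q') for q ≤ q' -/
lemma count_split (u : Equiv.Perm (Fin n)) (c q q' : ℕ) (hqq : q ≤ q') :
    (Finset.univ.filter (fun s : Fin n => (s:ℕ) < c ∧ q < (u s : ℕ))).card
      = (Finset.univ.filter (fun s : Fin n => (s:ℕ) < c ∧ q' < (u s : ℕ))).card
        + (Finset.univ.filter (fun s : Fin n =>
            (s:ℕ) < c ∧ q < (u s : ℕ) ∧ (u s : ℕ) ≤ q')).card := by
  rw [← Finset.card_filter_add_card_filter_not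
    (s := Finset.univ.filter (fun s : Fin n => (s:ℕ) < c ∧ q < (u s : ℕ)))
    (p := fun s => q' < (u s : ℕ))]
  congr 1
  · rw [Finset.filter_filter]
    congr 1
    apply Finset.filter_congr
    intro s _
    constructor
    · rintro ⟨⟨h1, _⟩, h2⟩; exact ⟨h1, h2⟩
    · rintro ⟨h1, h2⟩; exact ⟨⟨h1, by omega⟩, h2⟩
  · rw [Finset.filter_filter]
    congr 1
    apply Finset.filter_congr
    intro s _
    constructor
    · rintro ⟨⟨h1, h2⟩, h3⟩; exact ⟨h1, h2, by omega⟩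
    · rintro ⟨h1, h2, h3⟩; exact ⟨⟨h1, h2⟩, by omega⟩

lemma invCount_lt (u : Equiv.Perm (Fin n)) {a b : Fin n}
    (hab : (a:ℕ) < (b:ℕ)) (hval : (u a : ℕ) < (u b : ℕ)) :
    invCount u < invCount (u * Equiv.swap a b) := by
  classical
  set u' := u * Equiv.swap a b with hu'
  have hub : u' a = u b := by rw [hu', Equiv.Perm.mul_apply, Equiv.swap_apply_left]
  have hua : u' b = u a := by rw [hu', Equiv.Perm.mul_apply, Equiv.swap_apply_right]
  have hba : b ≠ a := fun h => by rw [h] at hab; omega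
  rw [invCount_eq_sum, invCount_eq_sum]
  -- abbreviations
  set f := fun t : Fin n => kfn u ((u t : ℕ)) ((t : ℕ)) with hf
  set g := fun t : Fin n => kfn u' ((u' t : ℕ)) ((t : ℕ)) with hg
  -- termwise on the rest
  have hrest : ∀ t : Fin n, t ≠ a → t ≠ b → f t ≤ g t := by
    intro t hta htb
    have : u' t = u t := by
      rw [hu', Equiv.Perm.mul_apply, Equiv.swap_apply_of_ne_of_ne hta htb]
    show kfn u ((u t : ℕ)) ((t : ℕ)) ≤ kfn u' ((u' t : ℕ)) ((t : ℕ))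
    rw [this]
    exact kfn_swap_mono u hab hval _ _
  -- key terms
  have hA : ∀ s : Fin n, (s:ℕ) < (a:ℕ) → u' s = u s := by
    intro s hs
    rw [hu', Equiv.Perm.mul_apply, Equiv.swap_apply_of_ne_of_ne]
    · intro h; rw [h] at hs; omega
    · intro h; rw [h] at hs; omega
  have hga : g a = (Finset.univ.filter (fun s : Fin n => (s:ℕ) < (a:ℕ) ∧ (u b : ℕ) < (u s : ℕ))).card := by
    show kfn u' ((u' a : ℕ)) ((a : ℕ)) = _
    rw [hub, kfn_split_neg u' a (by rw [hub]; omega)]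
    congr 1
    apply Finset.filter_congr
    intro s _
    constructor
    · rintro ⟨h1, h2⟩; rw [hA s h1] at h2; exact ⟨h1, h2⟩
    · rintro ⟨h1, h2⟩; rw [hA s h1]; exact ⟨h1, h2⟩
  have hfa : f a = (Finset.univ.filter (fun s : Fin n => (s:ℕ) < (a:ℕ) ∧ (u a : ℕ) < (u s : ℕ))).card := by
    show kfn u ((u a : ℕ)) ((a : ℕ)) = _
    rw [kfn_split_neg u a (by omega)]
  have hfb : f b = (Finset.univ.filter (fun s : Fin n => (s:ℕ) < (b:ℕ) ∧ (u b : ℕ) < (u s : ℕ))).card := by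
    show kfn u ((u b : ℕ)) ((b : ℕ)) = _
    rw [kfn_split_neg u b (by omega)]
  have hgb : g b = (Finset.univ.filter (fun s : Fin n => (s:ℕ) < (b:ℕ) ∧ (u a : ℕ) < (u s : ℕ))).card + 1 := by
    show kfn u' ((u' b : ℕ)) ((b : ℕ)) = _
    rw [hua]
    have := kfn_swap_out u hab (q := ((u a : ℕ))) (p := (b:ℕ)) (Or.inr (le_refl _))
    rw [← hu'] at this
    rw [this, kfn_split_pos u b hval]
  -- the exchange inequality
  have hXA := count_split u (a:ℕ) ((u a : ℕ)) ((u b : ℕ)) (le_of_lt hval)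
  have hXB := count_split u (b:ℕ) ((u a : ℕ)) ((u b : ℕ)) (le_of_lt hval)
  have hXle : (Finset.univ.filter (fun s : Fin n =>
        (s:ℕ) < (a:ℕ) ∧ (u a : ℕ) < (u s : ℕ) ∧ (u s : ℕ) ≤ (u b : ℕ))).card
      ≤ (Finset.univ.filter (fun s : Fin n =>
        (s:ℕ) < (b:ℕ) ∧ (u a : ℕ) < (u s : ℕ) ∧ (u s : ℕ) ≤ (u b : ℕ))).card := by
    apply Finset.card_le_card
    intro s hs
    simp only [Finset.mem_filter, Finset.mem_univ, true_and] at hs ⊢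
    omega
  have hkey : f a + f b + 1 ≤ g a + g b := by
    rw [hga, hfa, hfb, hgb]
    omega
  -- assemble sums
  have hmema : a ∈ (Finset.univ : Finset (Fin n)) := Finset.mem_univ _
  have hmemb : b ∈ (Finset.univ : Finset (Fin n)).erase a :=
    Finset.mem_erase.2 ⟨hba, Finset.mem_univ _⟩
  rw [← Finset.add_sum_erase _ f hmema, ← Finset.add_sum_erase _ g hmema,
      ← Finset.add_sum_erase _ f hmemb, ← Finset.add_sum_erase _ g hmemb]
  have hsumrest : ∑ t ∈ (Finset.univ.erase a).erase b, f t
      ≤ ∑ t ∈ (Finset.univ.erase a).erase b, g t := by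
    apply Finset.sum_le_sum
    intro t ht
    simp only [Finset.mem_erase] at ht
    exact hrest t ht.2.1 ht.1
  omega


lemma build (v : Equiv.Perm (Fin n)) :
    ∀ m (w : Equiv.Perm (Fin n)),
      (∑ x ∈ Finset.range n ×ˢ Finset.range n, (kfn v x.1 x.2 - kfn w x.1 x.2)) ≤ m →
      (∀ q p, kfn w q p ≤ kfn v q p) → bruhatLE w v := by
  intro m
  induction m using Nat.strong_induction_on with
  | _ m ih =>
  intro w hM hle
  classical
  by_cases hwv : w = v
  · rw [hwv]
    exact Relation.ReflTransGen.refl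
  · have hDne : (Finset.univ.filter (fun s : Fin n => w s ≠ v s)).Nonempty := by
      rw [Finset.filter_nonempty_iff]
      by_contra hc
      push_neg at hc
      exact hwv (Equiv.ext fun s => hc s (Finset.mem_univ s))
    set i := (Finset.univ.filter (fun s : Fin n => w s ≠ v s)).min' hDne with hidef
    have hi_mem : w i ≠ v i :=
      (Finset.mem_filter.1 (Finset.min'_mem _ hDne)).2
    have hi_min : ∀ s : Fin n, (s:ℕ) < (i:ℕ) → w s = v s := by
      intro s hs
      by_contra hne
      have hmem : s ∈ Finset.univ.filter (fun s : Fin n => w s ≠ v s) :=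
        Finset.mem_filter.2 ⟨Finset.mem_univ _, hne⟩
      have := Finset.min'_le _ s hmem
      rw [Fin.le_def] at this
      omega
    have hAgr : ∀ q : ℕ, (Finset.univ.filter (fun s : Fin n => (s:ℕ) < (i:ℕ) ∧ q < (w s:ℕ)))
        = (Finset.univ.filter (fun s : Fin n => (s:ℕ) < (i:ℕ) ∧ q < (v s:ℕ))) := by
      intro q
      apply Finset.filter_congr
      intro s _
      constructor
      · rintro ⟨h1, h2⟩; rw [hi_min s h1] at h2; exact ⟨h1, h2⟩
      · rintro ⟨h1, h2⟩; rw [← hi_min s h1] at h2; exact ⟨h1, h2⟩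
    have hwi_lt : (w i:ℕ) < (v i:ℕ) := by
      by_contra hge
      have hvw : (v i:ℕ) < (w i:ℕ) := by
        have : (w i:ℕ) ≠ (v i:ℕ) := fun hc => hi_mem (Fin.ext hc)
        omega
      have h1 := hle ((v i : ℕ)) ((i : ℕ))
      rw [kfn_split_pos w i hvw, kfn_split_neg v i (by omega), hAgr] at h1
      omega
    have hJne : (Finset.univ.filter (fun t : Fin n =>
        (i:ℕ) < (t:ℕ) ∧ (w i:ℕ) < (w t:ℕ) ∧ (w t:ℕ) ≤ (v i:ℕ))).Nonempty := by
      refine ⟨w.symm (v i), ?_⟩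
      simp only [Finset.mem_filter, Finset.mem_univ, true_and]
      have happ : w (w.symm (v i)) = v i := w.apply_symm_apply _
      have hne : w.symm (v i) ≠ i := by
        intro hc
        apply hi_mem
        rw [← happ, hc]
      have hnlt : ¬ ((w.symm (v i) : ℕ) < (i:ℕ)) := by
        intro hlt
        have heq := hi_min _ hlt
        rw [happ] at heq
        exact hne ((v.injective heq).symm)
      have hvalne : ((w.symm (v i)) : ℕ) ≠ (i:ℕ) := fun hc => hne (Fin.ext hc)
      refine ⟨by omega, ?_, ?_⟩
      · rw [happ]; exact hwi_lt
      · rw [happ]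
    set j := (Finset.univ.filter (fun t : Fin n =>
        (i:ℕ) < (t:ℕ) ∧ (w i:ℕ) < (w t:ℕ) ∧ (w t:ℕ) ≤ (v i:ℕ))).min' hJne with hjdef
    obtain ⟨hij, hwij, hwjv⟩ :
        (i:ℕ) < (j:ℕ) ∧ (w i:ℕ) < (w j:ℕ) ∧ (w j:ℕ) ≤ (v i:ℕ) :=
      (Finset.mem_filter.1 (Finset.min'_mem _ hJne)).2
    have hj_min : ∀ t : Fin n, (i:ℕ) < (t:ℕ) → (t:ℕ) < (j:ℕ) →
        ¬ ((w i:ℕ) < (w t:ℕ) ∧ (w t:ℕ) ≤ (v i:ℕ)) := by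
      intro t hit htj hc
      have hmem : t ∈ Finset.univ.filter (fun t : Fin n =>
          (i:ℕ) < (t:ℕ) ∧ (w i:ℕ) < (w t:ℕ) ∧ (w t:ℕ) ≤ (v i:ℕ)) :=
        Finset.mem_filter.2 ⟨Finset.mem_univ _, hit, hc.1, hc.2⟩
      have := Finset.min'_le _ t hmem
      rw [Fin.le_def] at this
      omega
    have hstrict : ∀ q p, (w i:ℕ) ≤ q → q < (w j:ℕ) → (i:ℕ) ≤ p → p < (j:ℕ) →
        kfn w q p + 1 ≤ kfn v q p := by
      intro q p hq1 hq2 hp1 hp2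
      set Q := ((v i : ℕ)) with hQ
      have hqQ : q < Q := by omega
      have hC : (Finset.univ.filter (fun s : Fin n => (i:ℕ) ≤ (s:ℕ) ∧ (s:ℕ) ≤ p ∧ q < (w s:ℕ)))
          = (Finset.univ.filter (fun s : Fin n =>
              (i:ℕ) ≤ (s:ℕ) ∧ (s:ℕ) ≤ p ∧ Q < (w s:ℕ))) := by
        apply Finset.filter_congr
        intro s _
        constructor
        · rintro ⟨h1, h2, h3⟩
          refine ⟨h1, h2, ?_⟩
          rcases eq_or_lt_of_le h1 with he | hl
          · exfalso
            have hsi : s = i := Fin.ext he.symm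
            rw [hsi] at h3
            omega
          · have hnb := hj_min s hl (by omega)
            push_neg at hnb
            have hwiws : (w i:ℕ) < (w s:ℕ) := by omega
            have := hnb hwiws
            omega
        · rintro ⟨h1, h2, h3⟩
          exact ⟨h1, h2, by omega⟩
      have hQle := hle Q p
      rw [kfn_split2 w i hp1, kfn_split2 v i hp1, hAgr] at hQle
      have hins : insert i (Finset.univ.filter (fun s : Fin n =>
            (i:ℕ) ≤ (s:ℕ) ∧ (s:ℕ) ≤ p ∧ Q < (v s:ℕ)))
          ⊆ (Finset.univ.filter (fun s : Fin n =>
            (i:ℕ) ≤ (s:ℕ) ∧ (s:ℕ) ≤ p ∧ q < (v s:ℕ))) := by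
        intro s hs
        rcases Finset.mem_insert.1 hs with rfl | hs'
        · simp only [Finset.mem_filter, Finset.mem_univ, true_and]
          exact ⟨le_refl _, hp1, by omega⟩
        · simp only [Finset.mem_filter, Finset.mem_univ, true_and] at hs' ⊢
          exact ⟨hs'.1, hs'.2.1, by omega⟩
      have hnotmem : i ∉ (Finset.univ.filter (fun s : Fin n =>
            (i:ℕ) ≤ (s:ℕ) ∧ (s:ℕ) ≤ p ∧ Q < (v s:ℕ))) := by
        simp only [Finset.mem_filter, Finset.mem_univ, true_and, not_and]
        intro _ _
        omega
      have hcard := Finset.card_le_card hins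
      rw [Finset.card_insert_of_notMem hnotmem] at hcard
      rw [kfn_split2 w i hp1, kfn_split2 v i hp1, hAgr, hC]
      omega
    set w' := w * Equiv.swap i j with hw'
    have hij_fin : i ≠ j := by
      intro hc
      rw [hc] at hij
      exact lt_irrefl _ hij
    have hle' : ∀ q p, kfn w' q p ≤ kfn v q p := by
      intro q p
      rcases lt_or_ge p (j:ℕ) with hpj | hpj
      · rcases lt_or_ge p (i:ℕ) with hpi | hpi
        · rw [hw', kfn_swap_out w hij (Or.inl hpi)]
          exact hle q p
        · by_cases hqr : (w i:ℕ) ≤ q ∧ q < (w j:ℕ)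
          · calc kfn w' q p ≤ kfn w q p + 1 := kfn_swap_le_add w hij hpj
              _ ≤ kfn v q p := hstrict q p hqr.1 hqr.2 hpi hpj
          · have hq' : q < (w i:ℕ) ∨ (w j:ℕ) ≤ q := by omega
            calc kfn w' q p ≤ kfn w q p := kfn_swap_le' w hij hq' hpj
              _ ≤ kfn v q p := hle q p
      · rw [hw', kfn_swap_out w hij (Or.inr hpj)]
        exact hle q p
    have hmono : ∀ q p, kfn w q p ≤ kfn w' q p := fun q p => kfn_swap_mono w hij hwij q p
    have hstrictpt : kfn w ((w i : ℕ)) ((i : ℕ)) < kfn w' ((w i : ℕ)) ((i : ℕ)) :=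
      kfn_swap_lt w hij (le_refl _) hwij (le_refl _) hij
    have hMlt : (∑ x ∈ Finset.range n ×ˢ Finset.range n, (kfn v x.1 x.2 - kfn w' x.1 x.2))
        < (∑ x ∈ Finset.range n ×ˢ Finset.range n, (kfn v x.1 x.2 - kfn w x.1 x.2)) := by
      apply Finset.sum_lt_sum
      · intro x _
        have h1 := hmono x.1 x.2
        omega
      · refine ⟨(((w i : ℕ)), ((i : ℕ))), ?_, ?_⟩
        · rw [Finset.mem_product]
          exact ⟨Finset.mem_range.2 (w i).isLt, Finset.mem_range.2 i.isLt⟩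
        · show kfn v ((w i : ℕ)) ((i : ℕ)) - kfn w' ((w i : ℕ)) ((i : ℕ))
            < kfn v ((w i : ℕ)) ((i : ℕ)) - kfn w ((w i : ℕ)) ((i : ℕ))
          have h2 := hle' ((w i : ℕ)) ((i : ℕ))
          omega
    have hrec : bruhatLE w' v :=
      ih _ (lt_of_lt_of_le hMlt hM) w' (le_refl _) hle'
    have hstep : invCount w < invCount w' := invCount_lt w hij hwij
    exact Relation.ReflTransGen.head ⟨⟨i, j, hij_fin, hw'⟩, hstep⟩ hrec


lemma bruhat_inv {x y : Equiv.Perm (Fin n)} (h : bruhatLE x y) :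
    x = y ∨ invCount x < invCount y := by
  induction h with
  | refl => exact Or.inl rfl
  | tail _ hstep ihp =>
    rcases ihp with rfl | hlt
    · exact Or.inr hstep.2
    · exact Or.inr (lt_trans hlt hstep.2)

lemma step_mono_of_lt {u : Equiv.Perm (Fin n)} {a b : Fin n} (hab : (a:ℕ) < (b:ℕ))
    (hinv : invCount u < invCount (u * Equiv.swap a b)) (q p : ℕ) :
    kfn u q p ≤ kfn (u * Equiv.swap a b) q p := by
  rcases lt_trichotomy ((u a : ℕ)) ((u b : ℕ)) with hv | hv | hv
  · exact kfn_swap_mono u hab hv q p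
  · exact absurd (u.injective (Fin.ext hv)) (fun hc => by rw [hc] at hab; omega)
  · exfalso
    set u' := u * Equiv.swap a b with hu'
    have hva : (u' a : ℕ) = (u b : ℕ) := by
      rw [hu', Equiv.Perm.mul_apply, Equiv.swap_apply_left]
    have hvb : (u' b : ℕ) = (u a : ℕ) := by
      rw [hu', Equiv.Perm.mul_apply, Equiv.swap_apply_right]
    have hval' : (u' a : ℕ) < (u' b : ℕ) := by omega
    have hself : u' * Equiv.swap a b = u := by
      rw [hu', mul_assoc, Equiv.swap_mul_self, mul_one]
    have hmono : ∀ q p, kfn u' q p ≤ kfn u q p := by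
      intro q p
      have := kfn_swap_mono u' hab hval' q p
      rwa [hself] at this
    have hne : u' ≠ u := by
      intro hc
      have : u' a = u a := by rw [hc]
      rw [hu', Equiv.Perm.mul_apply, Equiv.swap_apply_left] at this
      have := congrArg (fun t : Fin n => (t:ℕ)) this
      omega
    have hb : bruhatLE u' u := build u _ u' (le_refl _) hmono
    rcases bruhat_inv hb with hc | hc
    · exact hne hc
    · exact absurd hinv (lt_asymm hc)

lemma step_mono {u : Equiv.Perm (Fin n)} {a b : Fin n} (hab : a ≠ b)
    (hinv : invCount u < invCount (u * Equiv.swap a b)) (q p : ℕ) :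
    kfn u q p ≤ kfn (u * Equiv.swap a b) q p := by
  rcases lt_trichotomy ((a:ℕ)) ((b:ℕ)) with h | h | h
  · exact step_mono_of_lt h hinv q p
  · exact absurd (Fin.ext h) hab
  · rw [Equiv.swap_comm] at hinv ⊢
    exact step_mono_of_lt h hinv q p

lemma bruhat_to_kfn {w v : Equiv.Perm (Fin n)} (h : bruhatLE w v) (q p : ℕ) :
    kfn w q p ≤ kfn v q p := by
  induction h with
  | refl => exact le_refl _
  | tail _ hstep ihp =>
    obtain ⟨⟨a, b, hab, rfl⟩, hinv⟩ := hstep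
    exact le_trans ihp (step_mono hab hinv q p)


lemma inD (w v : Equiv.Perm (Fin n))
    (h : ∀ b ∈ essSet w, kfn w b.1 b.2 ≤ kfn v b.1 b.2) :
    ∀ m q p, 2*n ≤ q + p + m → ((q, p) : ℕ × ℕ) ∈ rothe w → kfn w q p ≤ kfn v q p := by
  intro m
  induction m with
  | zero =>
    intro q p hbound hr
    obtain ⟨hj, h1, hi, h2⟩ := hr
    omega
  | succ m ihm =>
    intro q p hbound hr
    by_cases hA : ((q + 1, p) : ℕ × ℕ) ∈ rothe w
    · obtain ⟨hj, h1, hi, h2⟩ := hA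
      simp only at hj h1 hi h2
      have hw : kfn w q p = kfn w (q+1) p := kfn_unocc w hi h2
      have hv : kfn v (q+1) p ≤ kfn v q p := kfn_anti_q v (by omega)
      have := ihm (q+1) p (by omega) ⟨hj, h1, hi, h2⟩
      omega
    · by_cases hB : ((q, p + 1) : ℕ × ℕ) ∈ rothe w
      · obtain ⟨hj, h1, hi, h2⟩ := hB
        simp only at hj h1 hi h2
        have hw : kfn w q (p+1) = kfn w q p + 1 := kfn_succ_p_eq w hj h1
        have hv : kfn v q (p+1) ≤ kfn v q p + 1 := kfn_succ_p_le v q p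
        have := ihm q (p+1) (by omega) ⟨hj, h1, hi, h2⟩
        omega
      · exact h (q, p) ⟨hr, hA, hB⟩

lemma ess_to_all (w v : Equiv.Perm (Fin n))
    (h : ∀ b ∈ essSet w, kfn w b.1 b.2 ≤ kfn v b.1 b.2) :
    ∀ q p, kfn w q p ≤ kfn v q p := by
  have key : ∀ t, ∀ q p : ℕ, q + p ≤ t → kfn w q p ≤ kfn v q p := by
    intro t
    induction t using Nat.strong_induction_on with
    | _ t ih =>
    intro q p hqp
    by_cases hr : ((q, p) : ℕ × ℕ) ∈ rothe w
    · exact inD w v h (2*n) q p (by omega) hr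
    · by_cases hpn : p < n
      · by_cases hq1 : q < (w ⟨p, hpn⟩ : ℕ)
        · have hqn : q < n := lt_trans hq1 (w ⟨p, hpn⟩).isLt
          have hocc : ¬ p < ((w.symm ⟨q, hqn⟩ : Fin n) : ℕ) := by
            intro hc
            exact hr ⟨hpn, hq1, hqn, hc⟩
          push_neg at hocc
          rcases Nat.eq_zero_or_pos q with rfl | hq0
          · calc kfn w 0 p ≤ p := kfn_zero_q_le w hqn hocc
              _ ≤ kfn v 0 p := kfn_zero_q_ge v hpn
          · obtain ⟨r, rfl⟩ : ∃ r, q = r + 1 := ⟨q - 1, by omega⟩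
            have h1 : kfn w r p = kfn w (r+1) p + 1 := kfn_occ w hqn hocc
            have h2 : kfn v r p ≤ kfn v (r+1) p + 1 := kfn_succ_q_le v r p
            have h3 : kfn w r p ≤ kfn v r p := ih (r + p) (by omega) r p (le_refl _)
            omega
        · rcases Nat.eq_zero_or_pos p with rfl | hp0
          · rw [kfn_zero_p w hpn hq1]
            exact Nat.zero_le _
          · obtain ⟨p', rfl⟩ : ∃ p', p = p' + 1 := ⟨p - 1, by omega⟩
            rw [kfn_succ_p_eq' w hpn hq1]
            exact le_trans (ih (q + p') (by omega) q p' (le_refl _)) (kfn_mono_p v (by omega))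
      · rw [kfn_big_p w (le_of_not_gt hpn), ← kfn_big_p v (le_of_not_gt hpn)]
  intro q p
  exact key (q + p) q p (le_refl _)

end BP

/-- w ≤ v in Bruhat order iff k_w ≤ k_v on the essential set of w. -/
theorem stmt5 (n : ℕ) (w v : Equiv.Perm (Fin n)) :
    bruhatLE w v ↔ ∀ b ∈ essSet w, kfn w b.1 b.2 ≤ kfn v b.1 b.2 := by
  constructor
  · intro hb b _
    exact BP.bruhat_to_kfn hb b.1 b.2
  · intro h
    exact BP.build v _ w (le_refl _) (BP.ess_to_all w v h)
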